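/- (Serializability of parallel doubling) For shapes S_I and S_F: S_F can be obtained (up to translation) from S_I through a finite sequence of east and north RC doubling operations if and only if S_F can be obtained (up to translation) from S_I through a finite sequence of single column and single row doubling operations (i.e., east and north RC doublings with |D| = 1). -/

import Mathlib

/-- Minimum first coordinate of a shape (0 for the empty set). -/
def xmin (S : Finset (ℤ × ℤ)) : ℤ := ((S.image Prod.fst).min).untopD 0

/-- Minimum second coordinate of a shape (0 for the empty set). -/
def ymin (S : Finset (ℤ × ℤ)) : ℤ := ((S.image Prod.snd).min).untopD 0

/-- East full doubling. -/
def DE (S : Finset (ℤ × ℤ)) : Finset (ℤ × ℤ) :=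
  S.image (fun p => (2 * p.1 - xmin S, p.2)) ∪
    S.image (fun p => (2 * p.1 - xmin S + 1, p.2))

/-- North full doubling. -/
def DN (S : Finset (ℤ × ℤ)) : Finset (ℤ × ℤ) :=
  S.image (fun p => (p.1, 2 * p.2 - ymin S)) ∪
    S.image (fun p => (p.1, 2 * p.2 - ymin S + 1))

/-- Apply a sequence of full doubling operations (`true` = east, `false` = north),
in order (head of the list first). -/
def applySeq (σ : List Bool) (S : Finset (ℤ × ℤ)) : Finset (ℤ × ℤ) :=
  σ.foldl (fun T b => if b then DE T else DN T) S

/-- The (p,q)-rectangle around an integer point. -/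
noncomputable def Rec2 (u : ℤ × ℤ) (p q : ℕ) : Finset (ℤ × ℤ) :=
  Finset.Icc u.1 (u.1 + (p : ℤ) - 1) ×ˢ Finset.Icc u.2 (u.2 + (q : ℤ) - 1)

/-- The reconfiguration function `F_{l,k}`. -/
noncomputable def F (l k : ℕ) (S : Finset (ℤ × ℤ)) : Finset (ℤ × ℤ) :=
  S.biUnion fun p =>
    Rec2 (p.1 + ((2 : ℤ) ^ l - 1) * (p.1 - xmin S),
          p.2 + ((2 : ℤ) ^ k - 1) * (p.2 - ymin S)) (2 ^ l) (2 ^ k)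

/-- Two grid points are adjacent if they are at orthogonal distance 1. -/
def Adj (u v : ℤ × ℤ) : Prop := (u.1 - v.1).natAbs + (u.2 - v.2).natAbs = 1

/-- A shape is connected if any two of its points are joined by a path of
adjacent points inside the shape. -/
def ShapeConnected (S : Finset (ℤ × ℤ)) : Prop :=
  ∀ u ∈ S, ∀ v ∈ S,
    Relation.ReflTransGen (fun a b => a ∈ S ∧ b ∈ S ∧ Adj a b) u v

/-- `wD D x` is the number of elements of `D` strictly west of `x`. -/
def wD (D : Finset ℤ) (x : ℤ) : ℕ := (D.filter (· < x)).card

/-- East RC doubling of `S` with doubled column set `D`. -/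
def RCE (S : Finset (ℤ × ℤ)) (D : Finset ℤ) : Finset (ℤ × ℤ) :=
  S.image (fun p => (p.1 + (wD D p.1 : ℤ), p.2)) ∪
    (S.filter fun p => p.1 ∈ D).image fun p => (p.1 + (wD D p.1 : ℤ) + 1, p.2)

/-- North RC doubling of `S` with doubled row set `D`. -/
def RCN (S : Finset (ℤ × ℤ)) (D : Finset ℤ) : Finset (ℤ × ℤ) :=
  S.image (fun p => (p.1, p.2 + (wD D p.2 : ℤ))) ∪
    (S.filter fun p => p.2 ∈ D).image fun p => (p.1, p.2 + (wD D p.2 : ℤ) + 1)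

/-- `D` is an admissible doubled column set for `S`. -/
def eastAdmissible (S : Finset (ℤ × ℤ)) (D : Finset ℤ) : Prop :=
  D.Nonempty ∧ ∀ d ∈ D, ∃ y, (d, y) ∈ S

/-- `D` is an admissible doubled row set for `S`. -/
def northAdmissible (S : Finset (ℤ × ℤ)) (D : Finset ℤ) : Prop :=
  D.Nonempty ∧ ∀ d ∈ D, ∃ x, (x, d) ∈ S

/-- One east or north RC doubling step. -/
def RCStep (S T : Finset (ℤ × ℤ)) : Prop :=
  ∃ D : Finset ℤ,
    (eastAdmissible S D ∧ T = RCE S D) ∨ (northAdmissible S D ∧ T = RCN S D)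

/-- One single column or single row doubling step (an RC step with `|D| = 1`). -/
def SingleStep (S T : Finset (ℤ × ℤ)) : Prop :=
  ∃ D : Finset ℤ, D.card = 1 ∧
    ((eastAdmissible S D ∧ T = RCE S D) ∨ (northAdmissible S D ∧ T = RCN S D))

/-- Translate a shape by a vector. -/
def translateSh (v : ℤ × ℤ) (S : Finset (ℤ × ℤ)) : Finset (ℤ × ℤ) :=
  S.image fun p => (p.1 + v.1, p.2 + v.2)

/-- Single east column doubling at column `d`. -/
def oE (d : ℤ) (T : Finset (ℤ × ℤ)) : Finset (ℤ × ℤ) :=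
  (T.filter fun p => p.1 ≤ d) ∪ (T.filter fun p => d ≤ p.1).image fun p => (p.1 + 1, p.2)

/-- The column of `S` at `x`. -/
def colS (S : Finset (ℤ × ℤ)) (x : ℤ) : Finset ℤ := (S.filter fun p => p.1 = x).image Prod.snd

/-- The row of `S` at `y`. -/
def rowS (S : Finset (ℤ × ℤ)) (y : ℤ) : Finset ℤ := (S.filter fun p => p.2 = y).image Prod.fst

/-- `phiC S x` counts the column changes of `S` in the interval `(xmin S, x]`. -/
noncomputable def phiC (S : Finset (ℤ × ℤ)) (x : ℤ) : ℕ :=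
  ((Finset.Icc (xmin S + 1) x).filter fun x' => colS S x' ≠ colS S (x' - 1)).card

/-- `phiR S y` counts the row changes of `S` in the interval `(ymin S, y]`. -/
noncomputable def phiR (S : Finset (ℤ × ℤ)) (y : ℤ) : ℕ :=
  ((Finset.Icc (ymin S + 1) y).filter fun y' => rowS S y' ≠ rowS S (y' - 1)).card

/-- Column compression of a shape. -/
noncomputable def KC (S : Finset (ℤ × ℤ)) : Finset (ℤ × ℤ) := S.image fun p => ((phiC S p.1 : ℤ), p.2)

/-- Row compression of a shape. -/
noncomputable def KR (S : Finset (ℤ × ℤ)) : Finset (ℤ × ℤ) := S.image fun p => (p.1, (phiR S p.2 : ℤ))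

/-- The baseline shape of `S`. -/
noncomputable def Baseline (S : Finset (ℤ × ℤ)) : Finset (ℤ × ℤ) := KR (KC S)

/-- Number of distinct consecutive columns of `S`. -/
noncomputable def mC (S : Finset (ℤ × ℤ)) : ℕ := (S.image Prod.fst).sup (phiC S) + 1

/-- Number of distinct consecutive rows of `S`. -/
noncomputable def mR (S : Finset (ℤ × ℤ)) : ℕ := (S.image Prod.snd).sup (phiR S) + 1

/-- Consecutive multiplicity of the `i`-th distinct column of `S`. -/
noncomputable def MC (S : Finset (ℤ × ℤ)) (i : ℕ) : ℕ := ((S.image Prod.fst).filter fun x => phiC S x = i).card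

/-- Consecutive multiplicity of the `i`-th distinct row of `S`. -/
noncomputable def MR (S : Finset (ℤ × ℤ)) (i : ℕ) : ℕ := ((S.image Prod.snd).filter fun y => phiR S y = i).card

/-- The four unit directions. -/
def dirs : Finset (ℤ × ℤ) := {(1, 0), (-1, 0), (0, 1), (0, -1)}

/-- One node-addition growth step: a direction `d` is fixed and every new node is
generated at a position `p + d` for an existing node `p`. -/
def AddStep (S T : Finset (ℤ × ℤ)) : Prop :=
  ∃ d ∈ dirs, S ⊆ T ∧ T ⊆ S ∪ S.image (fun p => (p.1 + d.1, p.2 + d.2))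

lemma wD_singleton (d x : ℤ) : wD {d} x = if d < x then 1 else 0 := by
  simp [wD, Finset.filter_singleton]
  split <;> simp

lemma wD_erase (D : Finset ℤ) (d : ℤ) (hd : d ∈ D) (x : ℤ) :
    wD D x = wD (D.erase d) x + (if d < x then 1 else 0) := by
  unfold wD
  rw [Finset.filter_erase]
  by_cases h : d < x
  · rw [Finset.card_erase_of_mem (by simp [Finset.mem_filter, hd, h])]
    have : 0 < (D.filter (· < x)).card := Finset.card_pos.2 ⟨d, by simp [hd, h]⟩
    simp only [h, if_true]; omega
  · rw [Finset.erase_eq_of_notMem (by simp [h]), if_neg h]; ring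

lemma wD_le (D : Finset ℤ) (x : ℤ) : wD D x ≤ D.card := Finset.card_filter_le _ _

lemma wD_all_lt {D : Finset ℤ} {x : ℤ} (h : ∀ e ∈ D, e < x) : wD D x = D.card := by
  unfold wD; rw [Finset.filter_true_of_mem h]

lemma wD_mem_le {D : Finset ℤ} {x : ℤ} (h : x ∈ D) : wD D x + 1 ≤ D.card := by
  have h1 : D.filter (· < x) ⊆ D.erase x := by
    intro e he; simp only [Finset.mem_filter] at he
    exact Finset.mem_erase.2 ⟨by omega, he.1⟩
  have := Finset.card_le_card h1
  rw [Finset.card_erase_of_mem h] at this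
  have := Finset.card_pos.2 ⟨x, h⟩
  unfold wD; omega

lemma mem_RCE {S : Finset (ℤ × ℤ)} {D : Finset ℤ} {q : ℤ × ℤ} :
    q ∈ RCE S D ↔ (∃ x y, (x, y) ∈ S ∧ q = (x + (wD D x : ℤ), y)) ∨
      (∃ x y, (x, y) ∈ S ∧ x ∈ D ∧ q = (x + (wD D x : ℤ) + 1, y)) := by
  simp only [RCE, Finset.mem_union, Finset.mem_image, Finset.mem_filter, Prod.exists]
  constructor
  · rintro (⟨x, y, h, rfl⟩ | ⟨x, y, ⟨h, hd⟩, rfl⟩)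
    · exact Or.inl ⟨x, y, h, rfl⟩
    · exact Or.inr ⟨x, y, h, hd, rfl⟩
  · rintro (⟨x, y, h, rfl⟩ | ⟨x, y, h, hd, rfl⟩)
    · exact Or.inl ⟨x, y, h, rfl⟩
    · exact Or.inr ⟨x, y, ⟨h, hd⟩, rfl⟩

lemma RCE_split (S : Finset (ℤ × ℤ)) (D : Finset ℤ) (hD : D.Nonempty) :
    RCE S D = RCE (RCE S (D.erase (D.max' hD))) {D.max' hD + (D.card : ℤ) - 1} := by
  set d := D.max' hD with hdd
  set D' := D.erase d with hD'
  set d' : ℤ := d + (D.card : ℤ) - 1 with hd'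
  have hd : d ∈ D := D.max'_mem hD
  have hmax : ∀ e ∈ D, e ≤ d := fun e he => D.le_max' e he
  have hcard : D'.card = D.card - 1 := Finset.card_erase_of_mem hd
  have hDpos : 0 < D.card := Finset.card_pos.2 hD
  have hlt : ∀ e ∈ D', e < d := by
    intro e he
    rcases Finset.mem_erase.1 he with ⟨hne, heD⟩
    exact lt_of_le_of_ne (hmax e heD) hne
  have hwd : wD D' d = D.card - 1 := by rw [wD_all_lt hlt, hcard]
  have hsplit : ∀ x, wD D x = wD D' x + (if d < x then 1 else 0) := wD_erase D d hd
  ext q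
  obtain ⟨a, b⟩ := q
  rw [mem_RCE, mem_RCE]
  constructor
  · rintro (⟨x, y, hS, hq⟩ | ⟨x, y, hS, hxD, hq⟩)
    · rw [Prod.mk.injEq] at hq
      obtain ⟨ha, rfl⟩ := hq
      by_cases hx : d < x
      · -- x > d
        have h1 : wD D' x = D'.card := wD_all_lt (fun e he => lt_trans (hlt e he) hx)
        refine Or.inl ⟨x + (wD D' x : ℤ), b, mem_RCE.2 (Or.inl ⟨x, b, hS, rfl⟩), ?_⟩
        rw [Prod.mk.injEq]
        refine ⟨?_, rfl⟩
        rw [wD_singleton, if_pos (by omega)]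
        have := hsplit x
        simp only [if_pos hx] at this
        omega
      · have h1 : wD D x = wD D' x := by have := hsplit x; simp only [if_neg hx] at this; omega
        have h2 : wD D' x ≤ D'.card := wD_le _ _
        refine Or.inl ⟨x + (wD D' x : ℤ), b, mem_RCE.2 (Or.inl ⟨x, b, hS, rfl⟩), ?_⟩
        rw [Prod.mk.injEq]
        refine ⟨?_, rfl⟩
        rw [wD_singleton, if_neg (by omega)]
        omega
    · rw [Prod.mk.injEq] at hq
      obtain ⟨ha, rfl⟩ := hq
      by_cases hx : x = d
      · subst hx
        refine Or.inr ⟨d', b, mem_RCE.2 (Or.inl ⟨d, b, hS, by rw [Prod.mk.injEq]; exact ⟨by omega, rfl⟩⟩), Finset.mem_singleton_self _, ?_⟩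
        rw [Prod.mk.injEq]
        refine ⟨?_, rfl⟩
        rw [wD_singleton, if_neg (by omega)]
        have := hsplit d
        simp only [if_neg (lt_irrefl d)] at this
        omega
      · have hxD' : x ∈ D' := Finset.mem_erase.2 ⟨hx, hxD⟩
        have hxd : x < d := hlt x hxD'
        have h1 : wD D x = wD D' x := by
          have := hsplit x; simp only [if_neg (not_lt.2 hxd.le)] at this; omega
        have h2 : wD D' x + 1 ≤ D'.card := wD_mem_le hxD'
        refine Or.inl ⟨x + (wD D' x : ℤ) + 1, b,
          mem_RCE.2 (Or.inr ⟨x, b, hS, hxD', rfl⟩), ?_⟩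
        rw [Prod.mk.injEq]
        refine ⟨?_, rfl⟩
        rw [wD_singleton, if_neg (by omega)]
        omega
  · rintro (⟨c, y, hT, hq⟩ | ⟨c, y, hT, hc, hq⟩)
    · rw [Prod.mk.injEq] at hq
      obtain ⟨ha, rfl⟩ := hq
      rcases mem_RCE.1 hT with ⟨x, y', hS, heq⟩ | ⟨x, y', hS, hxD', heq⟩
      · rw [Prod.mk.injEq] at heq
        obtain ⟨rfl, rfl⟩ := heq
        by_cases hx : d < x
        · have h1 : wD D' x = D'.card := wD_all_lt (fun e he => lt_trans (hlt e he) hx)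
          refine Or.inl ⟨x, b, hS, ?_⟩
          rw [Prod.mk.injEq]
          refine ⟨?_, rfl⟩
          rw [wD_singleton, if_pos (by omega)] at ha
          have := hsplit x; simp only [if_pos hx] at this
          omega
        · have h1 : wD D x = wD D' x := by
            have := hsplit x; simp only [if_neg hx] at this; omega
          have h2 : wD D' x ≤ D'.card := wD_le _ _
          refine Or.inl ⟨x, b, hS, ?_⟩
          rw [Prod.mk.injEq]
          refine ⟨?_, rfl⟩
          rw [wD_singleton, if_neg (by push_neg at hx ⊢; omega)] at ha
          omega
      · rw [Prod.mk.injEq] at heq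
        obtain ⟨rfl, rfl⟩ := heq
        have hxd : x < d := hlt x hxD'
        have h1 : wD D x = wD D' x := by
          have := hsplit x; simp only [if_neg (not_lt.2 hxd.le)] at this; omega
        have h2 : wD D' x + 1 ≤ D'.card := wD_mem_le hxD'
        refine Or.inr ⟨x, b, hS, Finset.mem_of_mem_erase hxD', ?_⟩
        rw [Prod.mk.injEq]
        refine ⟨?_, rfl⟩
        rw [wD_singleton, if_neg (by omega)] at ha
        omega
    · rw [Finset.mem_singleton] at hc
      subst hc
      rw [Prod.mk.injEq] at hq
      obtain ⟨ha, rfl⟩ := hq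
      rcases mem_RCE.1 hT with ⟨x, y', hS, heq⟩ | ⟨x, y', hS, hxD', heq⟩
      · rw [Prod.mk.injEq] at heq
        obtain ⟨hxe, rfl⟩ := heq
        by_cases hx : d < x
        · have h1 : wD D' x = D'.card := wD_all_lt (fun e he => lt_trans (hlt e he) hx)
          omega
        · have h2 : wD D' x ≤ D'.card := wD_le _ _
          have hxd : x = d := by push_neg at hx; omega
          subst hxd
          refine Or.inr ⟨d, b, hS, hd, ?_⟩
          rw [Prod.mk.injEq]
          refine ⟨?_, rfl⟩
          rw [wD_singleton, if_neg (by omega)] at ha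
          have := hsplit d; simp only [if_neg (lt_irrefl d)] at this
          omega
      · rw [Prod.mk.injEq] at heq
        obtain ⟨hxe, rfl⟩ := heq
        have hxd : x < d := hlt x hxD'
        have h2 : wD D' x + 1 ≤ D'.card := wD_mem_le hxD'
        omega


lemma wD_erase_max (D : Finset ℤ) (hD : D.Nonempty) :
    wD (D.erase (D.max' hD)) (D.max' hD) = D.card - 1 := by
  rw [wD_all_lt, Finset.card_erase_of_mem (D.max'_mem hD)]
  intro e he
  rcases Finset.mem_erase.1 he with ⟨hne, heD⟩
  exact lt_of_le_of_ne (D.le_max' e heD) hne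

lemma RCE_single_admissible (S : Finset (ℤ × ℤ)) (D : Finset ℤ) (hD : D.Nonempty)
    (h : eastAdmissible S D) :
    eastAdmissible (RCE S (D.erase (D.max' hD))) {D.max' hD + (D.card : ℤ) - 1} := by
  refine ⟨Finset.singleton_nonempty _, ?_⟩
  intro e he
  rw [Finset.mem_singleton] at he
  obtain ⟨y, hy⟩ := h.2 (D.max' hD) (D.max'_mem hD)
  refine ⟨y, mem_RCE.2 (Or.inl ⟨D.max' hD, y, hy, ?_⟩)⟩
  rw [Prod.mk.injEq]
  refine ⟨?_, rfl⟩
  rw [he, wD_erase_max D hD]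
  have := Finset.card_pos.2 hD
  omega

lemma serialE_aux (S : Finset (ℤ × ℤ)) :
    ∀ n (D : Finset ℤ), D.card = n → eastAdmissible S D →
      Relation.ReflTransGen SingleStep S (RCE S D) := by
  intro n
  induction n with
  | zero =>
    intro D h hadm
    have := Finset.card_pos.2 hadm.1
    omega
  | succ n ih =>
    intro D hcard hadm
    by_cases h1 : n = 0
    · subst h1
      exact Relation.ReflTransGen.single ⟨D, hcard, Or.inl ⟨hadm, rfl⟩⟩
    · have hD := hadm.1
      have hd : D.max' hD ∈ D := D.max'_mem hD
      have hc' : (D.erase (D.max' hD)).card = n := by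
        rw [Finset.card_erase_of_mem hd, hcard]; omega
      have hadm' : eastAdmissible S (D.erase (D.max' hD)) :=
        ⟨Finset.card_pos.1 (by omega),
          fun e he => hadm.2 e (Finset.mem_of_mem_erase he)⟩
      have step : SingleStep (RCE S (D.erase (D.max' hD))) (RCE S D) := by
        rw [RCE_split S D hD]
        exact ⟨{D.max' hD + (D.card : ℤ) - 1}, Finset.card_singleton _,
          Or.inl ⟨RCE_single_admissible S D hD hadm, rfl⟩⟩
      exact (ih (D.erase (D.max' hD)) hc' hadm').tail step

lemma serialE (S : Finset (ℤ × ℤ)) (D : Finset ℤ) (h : eastAdmissible S D) :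
    Relation.ReflTransGen SingleStep S (RCE S D) :=
  serialE_aux S D.card D rfl h

/-- Swap the coordinates of a shape. -/
def swSh (S : Finset (ℤ × ℤ)) : Finset (ℤ × ℤ) := S.image Prod.swap

lemma swSh_swSh (S : Finset (ℤ × ℤ)) : swSh (swSh S) = S := by
  simp [swSh, Finset.image_image, Function.comp]

lemma RCN_eq_sw (S : Finset (ℤ × ℤ)) (D : Finset ℤ) :
    RCN S D = swSh (RCE (swSh S) D) := by
  ext ⟨a, b⟩
  simp only [RCN, swSh, RCE, Finset.mem_union, Finset.mem_image, Finset.mem_filter,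
    Prod.exists, Prod.swap_prod_mk, Prod.mk.injEq]
  constructor
  · rintro (⟨x, y, h, rfl, rfl⟩ | ⟨x, y, ⟨h, hd⟩, rfl, rfl⟩)
    · exact ⟨_, _, Or.inl ⟨y, x, ⟨x, y, h, rfl, rfl⟩, rfl, rfl⟩, rfl, rfl⟩
    · exact ⟨_, _, Or.inr ⟨y, x, ⟨⟨x, y, h, rfl, rfl⟩, hd⟩, rfl, rfl⟩, rfl, rfl⟩
  · rintro ⟨u, v, (⟨c, y, ⟨x', y', h, h1, h2⟩, rfl, rfl⟩ |
      ⟨c, y, ⟨⟨x', y', h, h1, h2⟩, hd⟩, rfl, rfl⟩), rfl, rfl⟩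
    · subst h1; subst h2; exact Or.inl ⟨x', y', h, rfl, rfl⟩
    · subst h1; subst h2; exact Or.inr ⟨x', y', ⟨h, hd⟩, rfl, rfl⟩

lemma northAdmissible_sw {S : Finset (ℤ × ℤ)} {D : Finset ℤ} (h : northAdmissible S D) :
    eastAdmissible (swSh S) D := by
  refine ⟨h.1, fun d hd => ?_⟩
  obtain ⟨x, hx⟩ := h.2 d hd
  exact ⟨x, Finset.mem_image.2 ⟨(x, d), hx, rfl⟩⟩

lemma eastAdmissible_sw {S : Finset (ℤ × ℤ)} {D : Finset ℤ} (h : eastAdmissible S D) :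
    northAdmissible (swSh S) D := by
  refine ⟨h.1, fun d hd => ?_⟩
  obtain ⟨y, hy⟩ := h.2 d hd
  exact ⟨y, Finset.mem_image.2 ⟨(d, y), hy, rfl⟩⟩

lemma singleStep_sw {A B : Finset (ℤ × ℤ)} (h : SingleStep A B) :
    SingleStep (swSh A) (swSh B) := by
  obtain ⟨D, hc, h | h⟩ := h
  · refine ⟨D, hc, Or.inr ⟨eastAdmissible_sw h.1, ?_⟩⟩
    rw [h.2, RCN_eq_sw, swSh_swSh]
  · refine ⟨D, hc, Or.inl ⟨northAdmissible_sw h.1, ?_⟩⟩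
    rw [h.2, RCN_eq_sw, swSh_swSh]

lemma serialN (S : Finset (ℤ × ℤ)) (D : Finset ℤ) (h : northAdmissible S D) :
    Relation.ReflTransGen SingleStep S (RCN S D) := by
  have h' := northAdmissible_sw h
  have p1 := serialE (swSh S) D h'
  have p2 : Relation.ReflTransGen SingleStep (swSh (swSh S)) (swSh (RCE (swSh S) D)) :=
    Relation.ReflTransGen.lift swSh (fun a b hab => singleStep_sw hab) _ _ p1
  rwa [swSh_swSh, ← RCN_eq_sw] at p2

lemma RCStep_serial {S T : Finset (ℤ × ℤ)} (h : RCStep S T) :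
    Relation.ReflTransGen SingleStep S T := by
  obtain ⟨D, ⟨hadm, rfl⟩ | ⟨hadm, rfl⟩⟩ := h
  · exact serialE S D hadm
  · exact serialN S D hadm

lemma RTG_serial {S T : Finset (ℤ × ℤ)}
    (h : Relation.ReflTransGen RCStep S T) :
    Relation.ReflTransGen SingleStep S T := by
  induction h with
  | refl => exact Relation.ReflTransGen.refl
  | tail _ hstep ih => exact ih.trans (RCStep_serial hstep)

/-- serializability of parallel doubling: `S_F` is reachable (up to
translation) from `S_I` via RC doubling operations iff it is reachable via single
column/row doubling operations. -/
theorem RC_serializable (S_I S_F : Finset (ℤ × ℤ))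
    (hI : S_I.Nonempty) (hF : S_F.Nonempty) :
    (∃ v : ℤ × ℤ, Relation.ReflTransGen RCStep S_I (translateSh v S_F)) ↔
      (∃ v : ℤ × ℤ, Relation.ReflTransGen SingleStep S_I (translateSh v S_F)) := by
  constructor
  · rintro ⟨v, hpath⟩
    exact ⟨v, RTG_serial hpath⟩
  · rintro ⟨v, hpath⟩
    refine ⟨v, Relation.ReflTransGen.mono (fun a b hab => ?_) _ _ hpath⟩
    obtain ⟨D, _, h⟩ := hab
    exact ⟨D, h⟩
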